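/- Let k be a field, let G₁,…,Gₙ be non-solvable groups, and let G = G₁ × ⋯ × Gₙ be their direct product. If there exists an injective group homomorphism from G into GL_d(k) for some d, then d ≥ 2n. -/

import Mathlib

open Module Submodule

namespace MinRepAux

universe u

variable {k : Type u} [Field k] {V : Type u} [AddCommGroup V] [Module k V]

theorem mul_apply' (a b : V ≃ₗ[k] V) (v : V) : (a * b) v = a (b v) := rfl

/-- A submodule is invariant under a subgroup of linear automorphisms. -/
def Invt (H : Subgroup (V ≃ₗ[k] V)) (X : Submodule k V) : Prop :=
  ∀ g ∈ H, ∀ x ∈ X, g x ∈ X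

theorem Invt.map_eq {H : Subgroup (V ≃ₗ[k] V)} {X : Submodule k V} (hX : Invt H X)
    {g : V ≃ₗ[k] V} (hg : g ∈ H) : X.map (g : V →ₗ[k] V) = X := by
  apply le_antisymm
  · rintro _ ⟨x, hx, rfl⟩
    exact hX g hg x hx
  · intro x hx
    refine ⟨g⁻¹ x, hX g⁻¹ (inv_mem hg) x hx, ?_⟩
    show (g * g⁻¹ : V ≃ₗ[k] V) x = x
    rw [mul_inv_cancel]
    rfl

noncomputable def resHom (H : Subgroup (V ≃ₗ[k] V)) (X : Submodule k V) (hX : Invt H X) :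
    ↥H →* (↥X ≃ₗ[k] ↥X) :=
  MonoidHom.mk' (fun g => (g : V ≃ₗ[k] V).ofSubmodules X X (hX.map_eq g.2))
    (by
      intro a b
      apply LinearEquiv.ext
      intro x
      apply Subtype.ext
      simp [LinearEquiv.ofSubmodules_apply, mul_apply'])

theorem resHom_apply {H : Subgroup (V ≃ₗ[k] V)} {X : Submodule k V} (hX : Invt H X)
    (g : ↥H) (x : ↥X) : (resHom H X hX g x : V) = (g : V ≃ₗ[k] V) x := rfl

noncomputable def quotHom (H : Subgroup (V ≃ₗ[k] V)) (X : Submodule k V) (hX : Invt H X) :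
    ↥H →* ((V ⧸ X) ≃ₗ[k] (V ⧸ X)) :=
  MonoidHom.mk' (fun g => Submodule.Quotient.equiv X X (g : V ≃ₗ[k] V) (hX.map_eq g.2))
    (by
      intro a b
      apply LinearEquiv.ext
      intro x
      obtain ⟨v, rfl⟩ := Submodule.Quotient.mk_surjective X x
      simp [Submodule.Quotient.equiv_apply, Submodule.mapQ_apply, mul_apply'])

theorem quotHom_apply {H : Subgroup (V ≃ₗ[k] V)} {X : Submodule k V} (hX : Invt H X)
    (g : ↥H) (v : V) :
    (quotHom H X hX g) (Submodule.Quotient.mk v) = Submodule.Quotient.mk ((g : V ≃ₗ[k] V) v) := by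
  simp [quotHom, Submodule.Quotient.equiv_apply, Submodule.mapQ_apply]

theorem comm_of_trivial {X : Submodule k V} {g h : V ≃ₗ[k] V}
    (hg1 : ∀ x ∈ X, g x = x) (hg2 : ∀ v : V, g v - v ∈ X)
    (hh1 : ∀ x ∈ X, h x = x) (hh2 : ∀ v : V, h v - v ∈ X) : g * h = h * g := by
  apply LinearEquiv.ext
  intro v
  have e1 : g (h v) = g v + (h v - v) := by
    have hv : h v = v + (h v - v) := by abel
    calc g (h v) = g (v + (h v - v)) := by rw [← hv]
    _ = g v + g (h v - v) := map_add g _ _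
    _ = g v + (h v - v) := by rw [hg1 _ (hh2 v)]
  have e2 : h (g v) = h v + (g v - v) := by
    have hv : g v = v + (g v - v) := by abel
    calc h (g v) = h (v + (g v - v)) := by rw [← hv]
    _ = h v + h (g v - v) := map_add h _ _
    _ = h v + (g v - v) := by rw [hh1 _ (hg2 v)]
  rw [mul_apply', mul_apply', e1, e2]
  abel

theorem comm_of_finrank_le_one [FiniteDimensional k V] (hdim : finrank k V ≤ 1)
    (e f : V ≃ₗ[k] V) : e * f = f * e := by
  rcases subsingleton_or_nontrivial V with hs | hn
  · apply LinearEquiv.ext; intro v; exact Subsingleton.elim _ _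
  · have h1 : finrank k V = 1 := le_antisymm hdim (Module.finrank_pos_iff.mpr hn)
    let b := Module.finBasisOfFinrankEq k V h1
    have hrepr : ∀ v : V, v = b.repr v 0 • b 0 := by
      intro v
      conv_lhs => rw [← b.sum_repr v]
      simp
    have key : ∀ (e : V ≃ₗ[k] V) (v : V), e v = b.repr (e (b 0)) 0 • v := by
      intro e v
      calc e v = e (b.repr v 0 • b 0) := by rw [← hrepr v]
      _ = b.repr v 0 • e (b 0) := map_smul e _ _
      _ = b.repr v 0 • (b.repr (e (b 0)) 0 • b 0) := by rw [← hrepr (e (b 0))]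
      _ = b.repr (e (b 0)) 0 • (b.repr v 0 • b 0) := smul_comm _ _ _
      _ = b.repr (e (b 0)) 0 • v := by rw [← hrepr v]
    apply LinearEquiv.ext
    intro v
    rw [mul_apply', mul_apply', key e (f v), key f v, key f (e v), key e v,
      smul_smul, smul_smul, mul_comm]



/-- the submodule of `H₀`-equivariant linear maps from `W` to `V`. -/
def equivHoms (H₀ : Subgroup (V ≃ₗ[k] V)) (W : Submodule k V) (hW : Invt H₀ W) :
    Submodule k (↥W →ₗ[k] V) where
  carrier := {φ | ∀ (g : ↥H₀) (w : ↥W), φ (resHom H₀ W hW g w) = (g : V ≃ₗ[k] V) (φ w)}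
  add_mem' := by
    intro φ ψ hφ hψ g w
    simp [hφ g w, hψ g w]
  zero_mem' := by intro g w; simp
  smul_mem' := by
    intro c φ hφ g w
    simp [hφ g w]

theorem schur [IsAlgClosed k] [FiniteDimensional k V] {H₀ : Subgroup (V ≃ₗ[k] V)}
    {W : Submodule k V} (hW : Invt H₀ W) (hWbot : W ≠ ⊥)
    (hmin : ∀ Y : Submodule k V, Y ≠ ⊥ → Invt H₀ Y → Y ≤ W → Y = W)
    (σ : ↥W →ₗ[k] ↥W)
    (hσ : ∀ (g : ↥H₀) (w : ↥W), σ (resHom H₀ W hW g w) = resHom H₀ W hW g (σ w)) :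
    ∃ c : k, ∀ w, σ w = c • w := by
  haveI : Nontrivial ↥W := Submodule.nontrivial_iff_ne_bot.mpr hWbot
  obtain ⟨c, hc⟩ := Module.End.exists_eigenvalue σ
  refine ⟨c, ?_⟩
  set E := Module.End.eigenspace σ c with hE
  have hEbot : E ≠ ⊥ := hc
  set Y : Submodule k V := E.map W.subtype with hY
  have hYW : Y ≤ W := by rintro _ ⟨w, hw, rfl⟩; exact w.2
  have hYbot : Y ≠ ⊥ := by
    intro h
    apply hEbot
    apply Submodule.map_injective_of_injective (Submodule.injective_subtype W)
    rw [← hY, h, Submodule.map_bot]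
  have hYinv : Invt H₀ Y := by
    rintro g hg _ ⟨w, hw, rfl⟩
    refine ⟨resHom H₀ W hW ⟨g, hg⟩ w, ?_, (resHom_apply hW ⟨g, hg⟩ w)⟩
    simp only [hE, SetLike.mem_coe, Module.End.mem_eigenspace_iff] at hw ⊢
    rw [hσ, hw, map_smul]
  have hYeq : Y = W := hmin Y hYbot hYinv hYW
  have hEtop : E = ⊤ := by
    apply Submodule.map_injective_of_injective (Submodule.injective_subtype W)
    rw [← hY, hYeq, Submodule.map_subtype_top]
  intro w
  have hwE : w ∈ E := hEtop ▸ Submodule.mem_top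
  exact Module.End.mem_eigenspace_iff.mp hwE



theorem indep [IsAlgClosed k] [FiniteDimensional k V] {H₀ : Subgroup (V ≃ₗ[k] V)}
    {W : Submodule k V} (hW : Invt H₀ W) (hWbot : W ≠ ⊥)
    (hmin : ∀ Y : Submodule k V, Y ≠ ⊥ → Invt H₀ Y → Y ≤ W → Y = W) :
    ∀ (r : ℕ) (φs : Fin r → (↥W →ₗ[k] V)), (∀ i, φs i ∈ equivHoms H₀ W hW) →
      LinearIndependent k φs → ∀ w : Fin r → ↥W, (∑ i, φs i (w i)) = 0 → ∀ i, w i = 0 := by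
  intro r
  induction r with
  | zero => intro φs _ _ w _ i; exact i.elim0
  | succ r IH =>
    intro φs hmem hind w hsum
    have hker : ∀ u : Fin (r+1) → ↥W, (∑ i, φs i (u i)) = 0 → u (Fin.last r) = 0 →
        ∀ i, u i = 0 := by
      intro u hu hlast
      have hsum' : (∑ i : Fin r, φs i.castSucc (u i.castSucc)) = 0 := by
        rw [Fin.sum_univ_castSucc, hlast] at hu
        simpa using hu
      have h0 := IH (fun i => φs i.castSucc) (fun i => hmem _)
        (hind.comp Fin.castSucc (Fin.castSucc_injective r)) (fun i => u i.castSucc) hsum'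
      intro i
      exact Fin.lastCases hlast (fun i => h0 i) i
    by_cases hL : ∀ u : Fin (r+1) → ↥W, (∑ i, φs i (u i)) = 0 → u (Fin.last r) = 0
    · intro i; exact hker w hsum (hL w hsum) i
    · exfalso
      push_neg at hL
      obtain ⟨u₀, hu₀, hu₀last⟩ := hL
      set Φ : (Fin (r+1) → ↥W) →ₗ[k] V := ∑ i, (φs i).comp (LinearMap.proj i) with hΦ
      have hΦapply : ∀ u, Φ u = ∑ i, φs i (u i) := by
        intro u; simp [hΦ, LinearMap.sum_apply]
      set L : Submodule k ↥W := (LinearMap.ker Φ).map (LinearMap.proj (Fin.last r)) with hLdef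
      set X : Submodule k V := L.map W.subtype with hX
      have hXW : X ≤ W := by rintro _ ⟨w', _, rfl⟩; exact w'.2
      have hXbot : X ≠ ⊥ := by
        intro h
        apply hu₀last
        have hmemX : (u₀ (Fin.last r) : V) ∈ X :=
          ⟨u₀ (Fin.last r), ⟨u₀, by
            simp only [SetLike.mem_coe, LinearMap.mem_ker]
            rw [hΦapply]; exact hu₀, rfl⟩, rfl⟩
        rw [h] at hmemX
        exact Subtype.ext (by simpa using hmemX)
      have hXinv : Invt H₀ X := by
        rintro g hg _ ⟨w', ⟨u, hu, rfl⟩, rfl⟩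
        refine ⟨resHom H₀ W hW ⟨g, hg⟩ (u (Fin.last r)),
          ⟨fun i => resHom H₀ W hW ⟨g, hg⟩ (u i), ?_, rfl⟩,
          (resHom_apply hW ⟨g, hg⟩ (u (Fin.last r)))⟩
        simp only [SetLike.mem_coe, LinearMap.mem_ker] at hu ⊢
        rw [hΦapply]
        rw [hΦapply] at hu
        have heq : ∀ i, φs i (resHom H₀ W hW ⟨g, hg⟩ (u i)) = g (φs i (u i)) :=
          fun i => hmem i ⟨g, hg⟩ (u i)
        rw [Finset.sum_congr rfl fun i _ => heq i, ← map_sum, hu, map_zero]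
      have hXeq : X = W := hmin X hXbot hXinv hXW
      have hLtop : L = ⊤ := by
        apply Submodule.map_injective_of_injective (Submodule.injective_subtype W)
        rw [← hX, hXeq, Submodule.map_subtype_top]
      have hexu : ∀ v : ↥W, ∃ u : Fin (r+1) → ↥W, Φ u = 0 ∧ u (Fin.last r) = v := by
        intro v
        have hv : v ∈ L := hLtop ▸ Submodule.mem_top
        obtain ⟨u, hu, hulast⟩ := hv
        exact ⟨u, hu, hulast⟩
      choose sol hsol1 hsol2 using hexu
      have huniq : ∀ u u' : Fin (r+1) → ↥W, Φ u = 0 → Φ u' = 0 →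
          u (Fin.last r) = u' (Fin.last r) → u = u' := by
        intro u u' hu hu' hlast
        funext i
        have h0 : ∀ j, (u - u') j = 0 := by
          apply hker (u - u')
          · rw [← hΦapply, map_sub, hu, hu', sub_zero]
          · simp [hlast]
        have := h0 i
        rwa [Pi.sub_apply, sub_eq_zero] at this
      have hexists_c : ∀ i : Fin r, ∃ c : k, ∀ v : ↥W, sol v i.castSucc = c • v := by
        intro i
        have hadd : ∀ v v' : ↥W, sol (v + v') = sol v + sol v' := by
          intro v v'
          apply huniq _ _ (hsol1 _)
          · rw [map_add, hsol1, hsol1, add_zero]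
          · rw [hsol2]; simp [hsol2]
        have hsmul : ∀ (c : k) (v : ↥W), sol (c • v) = c • sol v := by
          intro c v
          apply huniq _ _ (hsol1 _)
          · rw [map_smul, hsol1, smul_zero]
          · rw [hsol2]; simp [hsol2]
        set σ : ↥W →ₗ[k] ↥W :=
          { toFun := fun v => sol v i.castSucc
            map_add' := fun v v' => by
              show sol (v + v') i.castSucc = sol v i.castSucc + sol v' i.castSucc
              rw [hadd]; rfl
            map_smul' := fun c v => by
              show sol (c • v) i.castSucc = c • sol v i.castSucc
              rw [hsmul]; rfl } with hσdef
        have hσcomm : ∀ (g : ↥H₀) (v : ↥W),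
            σ (resHom H₀ W hW g v) = resHom H₀ W hW g (σ v) := by
          intro g v
          have hsoleq : sol (resHom H₀ W hW g v) = fun j => resHom H₀ W hW g (sol v j) := by
            apply huniq _ _ (hsol1 _)
            · rw [hΦapply]
              have heq : ∀ j, φs j (resHom H₀ W hW g (sol v j)) = (g : V ≃ₗ[k] V) (φs j (sol v j)) :=
                fun j => hmem j g (sol v j)
              rw [Finset.sum_congr rfl fun j _ => heq j, ← map_sum, ← hΦapply, hsol1, map_zero]
            · rw [hsol2]; simp [hsol2]
          show sol (resHom H₀ W hW g v) i.castSucc = resHom H₀ W hW g (sol v i.castSucc)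
          rw [hsoleq]
        obtain ⟨c, hc⟩ := schur hW hWbot hmin σ hσcomm
        exact ⟨c, fun v => hc v⟩
      choose c hc using hexists_c
      have hzero : ((∑ i : Fin r, c i • φs i.castSucc) + φs (Fin.last r)) = 0 := by
        apply LinearMap.ext
        intro v
        have h1 : Φ (sol v) = 0 := hsol1 v
        rw [hΦapply, Fin.sum_univ_castSucc] at h1
        have h2 : ∀ i : Fin r, φs i.castSucc (sol v i.castSucc) = c i • (φs i.castSucc v) := by
          intro i
          rw [hc i v, map_smul]
        rw [Finset.sum_congr rfl fun i _ => h2 i, hsol2] at h1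
        simpa using h1
      have hcomb : (∑ j : Fin (r+1), (Fin.lastCases (motive := fun _ => k) (1:k) c j) • φs j) = 0 := by
        rw [Fin.sum_univ_castSucc]
        simpa using hzero
      have h1 := Fintype.linearIndependent_iff.mp hind _ hcomb (Fin.last r)
      simp at h1




theorem solvable_of_scalar {G : Subgroup (V ≃ₗ[k] V)}
    (h : ∀ g ∈ G, ∃ c : k, ∀ v : V, g v = c • v) : IsSolvable ↥G := by
  apply isSolvable_of_comm
  intro a b
  obtain ⟨c1, h1⟩ := h a.1 a.2
  obtain ⟨c2, h2⟩ := h b.1 b.2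
  apply Subtype.ext
  apply LinearEquiv.ext
  intro v
  show ((a.1 : V ≃ₗ[k] V) * b.1) v = ((b.1 : V ≃ₗ[k] V) * a.1) v
  rw [mul_apply', mul_apply', h1, h2, h2, h1, smul_smul, smul_smul, mul_comm]

set_option maxHeartbeats 2000000 in
theorem core (k : Type u) [Field k] [IsAlgClosed k] :
    ∀ (d : ℕ) (V : Type u) [AddCommGroup V] [Module k V] [FiniteDimensional k V],
      finrank k V = d → ∀ (ι : Type) [Fintype ι] (H : ι → Subgroup (V ≃ₗ[k] V)),
      (∀ i, ¬ IsSolvable ↥(H i)) →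
      (∀ i j : ι, i ≠ j → ∀ g ∈ H i, ∀ h ∈ H j, g * h = h * g) →
      2 * Fintype.card ι ≤ d := by
  intro d
  induction d using Nat.strong_induction_on with
  | _ d IH =>
  intro V _ _ _ hd ι _ H hns hcomm
  classical
  rcases isEmpty_or_nonempty ι with hι | hι
  · simp [Fintype.card_eq_zero]
  obtain ⟨i₀⟩ := hι
  by_cases hd2 : d ≤ 1
  · exfalso
    apply hns i₀
    apply isSolvable_of_comm
    intro a b
    exact Subtype.ext (comm_of_finrank_le_one (by rw [hd]; exact hd2) a.1 b.1)
  push_neg at hd2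
  by_cases hcard : Fintype.card ι ≤ 1
  · omega
  push_neg at hcard
  by_cases hred : ∃ X : Submodule k V, X ≠ ⊥ ∧ X ≠ ⊤ ∧ ∀ i, Invt (H i) X
  · obtain ⟨X, hXbot, hXtop, hXinv⟩ := hred
    set resF : ∀ i : ι, ↥(H i) →* (↥X ≃ₗ[k] ↥X) := fun i => resHom (H i) X (hXinv i) with hresF
    set quoF : ∀ i : ι, ↥(H i) →* ((V ⧸ X) ≃ₗ[k] (V ⧸ X)) := fun i => quotHom (H i) X (hXinv i)
      with hquoF
    have trivres : ∀ (i : ι) (g : ↥(H i)), resF i g = 1 → ∀ x ∈ X, (g : V ≃ₗ[k] V) x = x := by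
      intro i g hg x hx
      have h := resHom_apply (hXinv i) g ⟨x, hx⟩
      simp only [hresF] at hg
      rw [hg] at h
      simpa using h.symm
    have trivquo : ∀ (i : ι) (g : ↥(H i)), quoF i g = 1 →
        ∀ v : V, (g : V ≃ₗ[k] V) v - v ∈ X := by
      intro i g hg v
      have h := quotHom_apply (hXinv i) g v
      simp only [hquoF] at hg
      rw [hg] at h
      rw [← Submodule.Quotient.eq]
      simpa using h.symm
    have key : ∀ i : ι, IsSolvable ↥((resF i).range) → IsSolvable ↥((quoF i).range) → False := by
      intro i h1 h2
      haveI : Group.IsSolvable _ := h1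
      haveI : Group.IsSolvable _ := h2
      apply hns i
      set φ : ↥(H i) →* (↥X ≃ₗ[k] ↥X) × ((V ⧸ X) ≃ₗ[k] (V ⧸ X)) := (resF i).prod (quoF i)
        with hφdef
      haveI hker : Group.IsSolvable ↥φ.ker := by
        apply isSolvable_of_comm
        intro a b
        apply Subtype.ext
        apply Subtype.ext
        have ha : φ a.1 = 1 := a.2
        have hb : φ b.1 = 1 := b.2
        have ha1 : resF i a.1 = 1 := congrArg Prod.fst ha
        have ha2 : quoF i a.1 = 1 := congrArg Prod.snd ha
        have hb1 : resF i b.1 = 1 := congrArg Prod.fst hb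
        have hb2 : quoF i b.1 = 1 := congrArg Prod.snd hb
        exact comm_of_trivial (trivres i a.1 ha1) (trivquo i a.1 ha2)
          (trivres i b.1 hb1) (trivquo i b.1 hb2)
      haveI hrange : Group.IsSolvable ↥φ.range := by
        have hle : φ.range ≤ ((resF i).range).prod ((quoF i).range) := by
          rintro _ ⟨x, rfl⟩
          exact ⟨⟨x, rfl⟩, ⟨x, rfl⟩⟩
        haveI : Group.IsSolvable ↥(((resF i).range).prod ((quoF i).range)) := by
          have e := Subgroup.prodEquiv ((resF i).range) ((quoF i).range)
          exact solvable_of_solvable_injective (f := e.toMonoidHom) (e.injective)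
        exact solvable_of_solvable_injective (Subgroup.inclusion_injective hle)
      exact solvable_of_ker_le_range φ.ker.subtype φ.rangeRestrict
        (by rw [MonoidHom.ker_rangeRestrict, Subgroup.range_subtype])
    set Sp : ι → Prop := fun i => ¬ IsSolvable ↥((resF i).range) with hSp
    have hXlt : finrank k ↥X < d := by
      rw [← hd]; exact Submodule.finrank_lt hXtop
    have hXpos : 0 < finrank k ↥X :=
      Module.finrank_pos_iff.mpr (Submodule.nontrivial_iff_ne_bot.mpr hXbot)
    have hsum : finrank k (V ⧸ X) + finrank k ↥X = d := by
      rw [← hd]; exact Submodule.finrank_quotient_add_finrank X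
    have hQlt : finrank k (V ⧸ X) < d := by omega
    have hc1 : 2 * Fintype.card {i : ι // Sp i} ≤ finrank k ↥X := by
      refine IH _ hXlt ↥X rfl {i : ι // Sp i} (fun s => (resF s.1).range)
        (fun s => s.2) ?_
      rintro s t hst _ ⟨a, rfl⟩ _ ⟨b, rfl⟩
      have hne : s.1 ≠ t.1 := fun h => hst (Subtype.ext h)
      have h := hcomm s.1 t.1 hne a.1 a.2 b.1 b.2
      apply LinearEquiv.ext
      intro x
      apply Subtype.ext
      have e1 : ((resF s.1 a * resF t.1 b) x : V) = (a.1 : V ≃ₗ[k] V) ((b.1 : V ≃ₗ[k] V) x) := by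
        simp only [mul_apply', hresF]
        rw [resHom_apply]
        rw [resHom_apply]
      have e2 : ((resF t.1 b * resF s.1 a) x : V) = (b.1 : V ≃ₗ[k] V) ((a.1 : V ≃ₗ[k] V) x) := by
        simp only [mul_apply', hresF]
        rw [resHom_apply]
        rw [resHom_apply]
      rw [e1, e2, ← mul_apply', ← mul_apply', h]
    have hc2 : 2 * Fintype.card {i : ι // ¬ Sp i} ≤ finrank k (V ⧸ X) := by
      refine IH _ hQlt (V ⧸ X) rfl {i : ι // ¬ Sp i} (fun s => (quoF s.1).range) ?_ ?_
      · intro s hsol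
        exact key s.1 (not_not.mp s.2) hsol
      · rintro s t hst _ ⟨a, rfl⟩ _ ⟨b, rfl⟩
        have hne : s.1 ≠ t.1 := fun h => hst (Subtype.ext h)
        have h := hcomm s.1 t.1 hne a.1 a.2 b.1 b.2
        apply LinearEquiv.ext
        intro x
        obtain ⟨v, rfl⟩ := Submodule.Quotient.mk_surjective X x
        have e1 : (quoF s.1 a * quoF t.1 b) (Submodule.Quotient.mk v)
            = Submodule.Quotient.mk (((a.1 : V ≃ₗ[k] V) * (b.1 : V ≃ₗ[k] V)) v) := by
          simp only [mul_apply', hquoF]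
          rw [quotHom_apply (hXinv t.1) b v, quotHom_apply (hXinv s.1) a]
        have e2 : (quoF t.1 b * quoF s.1 a) (Submodule.Quotient.mk v)
            = Submodule.Quotient.mk (((b.1 : V ≃ₗ[k] V) * (a.1 : V ≃ₗ[k] V)) v) := by
          simp only [mul_apply', hquoF]
          rw [quotHom_apply (hXinv s.1) a v, quotHom_apply (hXinv t.1) b]
        rw [e1, e2, h]
    have hcards : Fintype.card {i : ι // Sp i} + Fintype.card {i : ι // ¬ Sp i}
        = Fintype.card ι := by
      have hcc : Fintype.card {i : ι // ¬ Sp i} = Fintype.card ι - Fintype.card {i : ι // Sp i} :=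
        Fintype.card_subtype_compl Sp
      have hle : Fintype.card {i : ι // Sp i} ≤ Fintype.card ι := Fintype.card_subtype_le _
      omega
    omega
  · have hirr : ∀ X : Submodule k V, (∀ i, Invt (H i) X) → X = ⊥ ∨ X = ⊤ := by
      intro X hX
      by_contra hcon
      push_neg at hcon
      exact hred ⟨X, hcon.1, hcon.2, hX⟩
    haveI hVnt : Nontrivial V := Module.nontrivial_of_finrank_pos (R := k)
      (by rw [hd]; omega)
    have htb : (⊤ : Submodule k V) ≠ ⊥ := by
      intro h
      have h0 : finrank k (⊤ : Submodule k V) = finrank k V := finrank_top k V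
      rw [h, finrank_bot, hd] at h0
      omega
    have hex : ∃ m : ℕ, ∃ X : Submodule k V, (X ≠ ⊥ ∧ Invt (H i₀) X) ∧ finrank k ↥X = m :=
      ⟨finrank k (⊤ : Submodule k V), ⊤, ⟨htb, fun g _ x _ => Submodule.mem_top⟩, rfl⟩
    obtain ⟨W, ⟨hWbot, hWinv⟩, hWrank⟩ := Nat.find_spec hex
    have hmin : ∀ Y : Submodule k V, Y ≠ ⊥ → Invt (H i₀) Y → Y ≤ W → Y = W := by
      intro Y h1 h2 hle
      have h3 : Nat.find hex ≤ finrank k ↥Y := Nat.find_min' hex ⟨Y, ⟨h1, h2⟩, rfl⟩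
      exact Submodule.eq_of_le_of_finrank_le hle (by omega)
    obtain ⟨j₁, hj₁⟩ := Fintype.exists_ne_of_one_lt_card hcard i₀
    have hWtop : W ≠ ⊤ := by
      intro htop
      apply hns j₁
      apply solvable_of_scalar
      intro g hg
      obtain ⟨c, hc⟩ := Module.End.exists_eigenvalue (g.toLinearMap)
      refine ⟨c, ?_⟩
      set E := Module.End.eigenspace g.toLinearMap c with hEdef
      have hEbot : E ≠ ⊥ := hc
      have hEinv : Invt (H i₀) E := by
        intro a ha x hx
        have hcg := hcomm i₀ j₁ (Ne.symm hj₁) a ha g hg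
        simp only [hEdef, SetLike.mem_coe, Module.End.mem_eigenspace_iff] at hx ⊢
        show g (a x) = c • a x
        calc g (a x) = (g * a) x := rfl
        _ = (a * g) x := by rw [hcg]
        _ = a (g x) := rfl
        _ = a (c • x) := by rw [show g x = c • x from hx]
        _ = c • a x := map_smul a c x
      have hEeq : E = W := hmin E hEbot hEinv (htop ▸ le_top)
      intro v
      have hv : v ∈ E := by rw [hEeq, htop]; exact Submodule.mem_top
      exact Module.End.mem_eigenspace_iff.mp hv
    set U : Submodule k (↥W →ₗ[k] V) := equivHoms (H i₀) W hWinv with hUdef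
    have hsubU : W.subtype ∈ U := by
      intro g w
      exact resHom_apply hWinv g w
    have hcomp_mem : ∀ (i : ι), i ≠ i₀ → ∀ g ∈ H i, ∀ φ : ↥U,
        ((g : V →ₗ[k] V)).comp (φ : ↥W →ₗ[k] V) ∈ U := by
      intro i hii g hg φ a w'
      have h1 := φ.2 a w'
      have hcg := hcomm i₀ i (Ne.symm hii) a.1 a.2 g hg
      show g ((φ : ↥W →ₗ[k] V) (resHom (H i₀) W hWinv a w'))
          = (a : ↥(H i₀)).1 (g ((φ : ↥W →ₗ[k] V) w'))
      rw [h1]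
      calc g ((a : ↥(H i₀)).1 ((φ : ↥W →ₗ[k] V) w'))
          = (g * (a : ↥(H i₀)).1) ((φ : ↥W →ₗ[k] V) w') := rfl
      _ = ((a : ↥(H i₀)).1 * g) ((φ : ↥W →ₗ[k] V) w') := by rw [hcg]
      _ = (a : ↥(H i₀)).1 (g ((φ : ↥W →ₗ[k] V) w')) := rfl
    set T : Submodule k V := ⨆ φ : ↥U, LinearMap.range (φ : ↥W →ₗ[k] V) with hTdef
    have hrangele : ∀ φ : ↥U, LinearMap.range (φ : ↥W →ₗ[k] V) ≤ T := fun φ =>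
      le_iSup (fun ψ : ↥U => LinearMap.range (ψ : ↥W →ₗ[k] V)) φ
    have hTtop : T = ⊤ := by
      have hTinv : ∀ i, Invt (H i) T := by
        intro i g hg x hx
        have hle : T ≤ Submodule.comap (g : V →ₗ[k] V) T := by
          apply iSup_le
          intro φ
          rintro _ ⟨w, rfl⟩
          show g ((φ : ↥W →ₗ[k] V) w) ∈ T
          by_cases hii : i = i₀
          · subst hii
            have h1 := φ.2 ⟨g, hg⟩ w
            rw [← h1]
            exact hrangele φ ⟨_, rfl⟩
          · exact hrangele ⟨_, hcomp_mem i hii g hg φ⟩ ⟨w, rfl⟩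
        exact hle hx
      rcases hirr T hTinv with h | h
      · exfalso
        have hWT : W ≤ T := by
          rw [← Submodule.range_subtype W]
          exact hrangele ⟨W.subtype, hsubU⟩
        rw [h] at hWT
        exact hWbot (le_bot_iff.mp hWT)
      · exact h
    have hW2 : 2 ≤ finrank k ↥W := by
      by_contra hlt
      push_neg at hlt
      apply hns i₀
      apply solvable_of_scalar
      intro g hg
      obtain ⟨w₀, hw₀mem, hw₀ne⟩ := Submodule.exists_mem_ne_zero_of_ne_bot hWbot
      have hspan : Submodule.span k {w₀} = W := by
        apply Submodule.eq_of_le_of_finrank_le (Submodule.span_le.mpr (by simp [hw₀mem]))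
        have h1 : finrank k (Submodule.span k {w₀}) = 1 := finrank_span_singleton hw₀ne
        omega
      obtain ⟨c, hc⟩ := Submodule.mem_span_singleton.mp
        (by rw [hspan]; exact hWinv g hg w₀ hw₀mem :
          g w₀ ∈ Submodule.span k {w₀})
      refine ⟨c, ?_⟩
      intro v
      have hv : v ∈ T := by rw [hTtop]; exact Submodule.mem_top
      rw [hTdef] at hv
      refine Submodule.iSup_induction (motive := fun v => g v = c • v)
        (fun φ : ↥U => LinearMap.range (φ : ↥W →ₗ[k] V)) hv ?_ (by simp) ?_
      · rintro φ _ ⟨w, rfl⟩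
        have h1 : (φ : ↥W →ₗ[k] V) (resHom (H i₀) W hWinv ⟨g, hg⟩ w)
            = g ((φ : ↥W →ₗ[k] V) w) := φ.2 ⟨g, hg⟩ w
        have hw : (w : V) ∈ Submodule.span k {w₀} := by rw [hspan]; exact w.2
        obtain ⟨a, ha⟩ := Submodule.mem_span_singleton.mp hw
        have hres : resHom (H i₀) W hWinv ⟨g, hg⟩ w = c • w := by
          apply Subtype.ext
          rw [resHom_apply]
          show g (w : V) = c • (w : V)
          rw [← ha, map_smul, ← hc, smul_smul, smul_smul, mul_comm]
        rw [← h1, hres, map_smul]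
      · intro x y hx hy
        rw [map_add, hx, hy, smul_add]
    have hUd : 2 * finrank k ↥U ≤ d := by
      set r := finrank k ↥U with hr
      set b := Module.finBasis k ↥U with hb
      set Ψ : (Fin r → ↥W) →ₗ[k] V := ∑ i, ((b i : ↥W →ₗ[k] V)).comp (LinearMap.proj i)
        with hΨdef
      have hΨapply : ∀ u, Ψ u = ∑ i, (b i : ↥W →ₗ[k] V) (u i) := by
        intro u
        simp [hΨdef, LinearMap.sum_apply]
      have hindb : LinearIndependent k (fun i => (b i : ↥W →ₗ[k] V)) :=
        b.linearIndependent.map' U.subtype (Submodule.ker_subtype U)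
      have hinj : Function.Injective Ψ := by
        rw [← LinearMap.ker_eq_bot]
        apply (Submodule.eq_bot_iff _).mpr
        intro u hu
        have h0 := indep hWinv hWbot hmin r (fun i => (b i : ↥W →ₗ[k] V))
          (fun i => (b i).2) hindb u
          (by rw [← hΨapply]; exact LinearMap.mem_ker.mp hu)
        funext i
        exact h0 i
      have hle := LinearMap.finrank_le_finrank_of_injective hinj
      have hpi : finrank k (Fin r → ↥W) = r * finrank k ↥W := by
        rw [Module.finrank_pi_fintype]
        simp [Finset.sum_const, mul_comm]
      rw [hpi, hd] at hle
      have h2r : 2 * r ≤ r * finrank k ↥W := by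
        rw [mul_comm 2 r]
        exact Nat.mul_le_mul_left r hW2
      omega
    have heqarrow : ∀ (g : V ≃ₗ[k] V) (φ : ↥W →ₗ[k] V),
        (LinearEquiv.arrowCongr (LinearEquiv.refl k ↥W) g) φ = ((g : V →ₗ[k] V)).comp φ := by
      intro g φ
      apply LinearMap.ext
      intro w
      simp [LinearEquiv.arrowCongr_apply]
    have hUmap : ∀ (i : ι), i ≠ i₀ → ∀ g ∈ H i,
        U.map ((LinearEquiv.arrowCongr (LinearEquiv.refl k ↥W) g
          : (↥W →ₗ[k] V) ≃ₗ[k] (↥W →ₗ[k] V)) : (↥W →ₗ[k] V) →ₗ[k] (↥W →ₗ[k] V)) = U := by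
      intro i hii g hg
      apply le_antisymm
      · rintro _ ⟨φ, hφ, rfl⟩
        show (LinearEquiv.arrowCongr (LinearEquiv.refl k ↥W) g) φ ∈ U
        rw [heqarrow]
        exact hcomp_mem i hii g hg ⟨φ, hφ⟩
      · intro φ hφ
        refine ⟨((g⁻¹ : V ≃ₗ[k] V) : V →ₗ[k] V).comp φ,
          hcomp_mem i hii g⁻¹ (inv_mem hg) ⟨φ, hφ⟩, ?_⟩
        show (LinearEquiv.arrowCongr (LinearEquiv.refl k ↥W) g)
          (((g⁻¹ : V ≃ₗ[k] V) : V →ₗ[k] V).comp φ) = φ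
        rw [heqarrow]
        apply LinearMap.ext
        intro w
        show g ((g⁻¹ : V ≃ₗ[k] V) (φ w)) = φ w
        rw [show ∀ v : V, g ((g⁻¹ : V ≃ₗ[k] V) v) = (g * g⁻¹) v from fun _ => rfl,
          mul_inv_cancel]
        rfl
    set ι' := {j : ι // j ≠ i₀} with hι'def
    set Φmap : ∀ j : ι', ↥(H j.1) →* (↥U ≃ₗ[k] ↥U) := fun j =>
      MonoidHom.mk' (fun g => (LinearEquiv.arrowCongr (LinearEquiv.refl k ↥W)
          (g : V ≃ₗ[k] V)).ofSubmodules U U (hUmap j.1 j.2 g.1 g.2))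
        (by
          intro a b
          apply LinearEquiv.ext
          intro φ
          apply Subtype.ext
          apply LinearMap.ext
          intro w
          simp only [mul_apply', LinearEquiv.ofSubmodules_apply]
          rw [heqarrow, heqarrow, heqarrow]
          rfl) with hΦmapdef
    have hΦval : ∀ (j : ι') (g : ↥(H j.1)) (φ : ↥U),
        ((Φmap j g φ : ↥W →ₗ[k] V)) = ((g.1 : V →ₗ[k] V)).comp (φ : ↥W →ₗ[k] V) := by
      intro j g φ
      show ((LinearEquiv.arrowCongr (LinearEquiv.refl k ↥W)
        (g : V ≃ₗ[k] V)).ofSubmodules U U (hUmap j.1 j.2 g.1 g.2) φ : ↥W →ₗ[k] V) = _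
      rw [LinearEquiv.ofSubmodules_apply, heqarrow]
    have hΦinj : ∀ j : ι', Function.Injective (Φmap j) := by
      intro j
      rw [← MonoidHom.ker_eq_bot_iff]
      apply (Subgroup.eq_bot_iff_forall _).mpr
      intro g hgker
      have h1 : Φmap j g = 1 := hgker
      have hfix : ∀ (φ : ↥U) (w : ↥W), (g.1 : V ≃ₗ[k] V) ((φ : ↥W →ₗ[k] V) w)
          = (φ : ↥W →ₗ[k] V) w := by
        intro φ w
        have h2 : Φmap j g φ = φ := by rw [h1]; rfl
        have h3 : ((Φmap j g φ : ↥W →ₗ[k] V)) w = (φ : ↥W →ₗ[k] V) w :=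
          DFunLike.congr_fun (congrArg Subtype.val h2) w
        rw [hΦval] at h3
        exact h3
      have hF : T ≤ LinearMap.ker (((g.1 : V ≃ₗ[k] V) : V →ₗ[k] V) - LinearMap.id) := by
        apply iSup_le
        intro φ
        rintro _ ⟨w, rfl⟩
        rw [LinearMap.mem_ker, LinearMap.sub_apply, LinearMap.id_apply, sub_eq_zero]
        exact hfix φ w
      rw [hTtop, top_le_iff] at hF
      apply Subtype.ext
      apply LinearEquiv.ext
      intro v
      have hv : v ∈ LinearMap.ker (((g.1 : V ≃ₗ[k] V) : V →ₗ[k] V) - LinearMap.id) := by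
        rw [hF]; exact Submodule.mem_top
      rw [LinearMap.mem_ker, LinearMap.sub_apply, LinearMap.id_apply, sub_eq_zero] at hv
      exact hv
    have hrec : 2 * Fintype.card ι' ≤ finrank k ↥U := by
      have hUlt : finrank k ↥U < d := by omega
      refine IH _ hUlt ↥U rfl ι' (fun j => (Φmap j).range) ?_ ?_
      · intro j hsol
        haveI : Group.IsSolvable _ := hsol
        apply hns j.1
        exact solvable_of_solvable_injective (f := (Φmap j).rangeRestrict)
          (fun a b hab => hΦinj j (by
            have := congrArg (Subtype.val) hab
            simpa using this))
      · rintro s t hst _ ⟨a, rfl⟩ _ ⟨b, rfl⟩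
        have hne : s.1 ≠ t.1 := fun h => hst (Subtype.ext h)
        have h := hcomm s.1 t.1 hne a.1 a.2 b.1 b.2
        apply LinearEquiv.ext
        intro φ
        apply Subtype.ext
        apply LinearMap.ext
        intro w
        simp only [mul_apply']
        have happ : ∀ (j : ι') (g : ↥(H j.1)) (ψ : ↥U) (w : ↥W),
            ((Φmap j g ψ : ↥W →ₗ[k] V)) w = (g.1 : V ≃ₗ[k] V) ((ψ : ↥W →ₗ[k] V) w) := by
          intro j g ψ w
          rw [hΦval]
          rfl
        rw [happ, happ, happ, happ]
        have h' : ∀ v : V, (a.1 : V ≃ₗ[k] V) ((b.1 : V ≃ₗ[k] V) v)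
            = (b.1 : V ≃ₗ[k] V) ((a.1 : V ≃ₗ[k] V) v) := by
          intro v
          rw [← mul_apply', h, mul_apply']
        exact h' _
    have hcard' : Fintype.card ι' = Fintype.card ι - 1 := by
      have h1 := Fintype.card_subtype_compl (fun j : ι => j = i₀)
      rw [Fintype.card_subtype_eq] at h1
      exact h1
    omega



end MinRepAux

/-- If `G₁, …, Gₙ` are non-solvable groups and their direct product embeds into `GL_d(k)`,
then `d ≥ 2n`. -/
theorem min_rep_dim_of_product_of_nonsolvable (k : Type*) [Field k] (n d : ℕ) (hn : 1 ≤ n)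
    (G : Fin n → Type*) [∀ i, Group (G i)]
    (hns : ∀ i, ¬ IsSolvable (G i))
    (f : (∀ i, G i) →* GL (Fin d) k) (hf : Function.Injective f) :
    2 * n ≤ d := by
  classical
  set K := AlgebraicClosure k with hK
  set F₁ : GL (Fin d) k →* GL (Fin d) K := Matrix.GeneralLinearGroup.map (algebraMap k K)
    with hF₁
  have hF₁inj : Function.Injective F₁ := by
    intro a b hab
    apply Units.ext
    have h := congrArg Units.val hab
    have h2 : ((a : Matrix (Fin d) (Fin d) k)).map (algebraMap k K)
        = ((b : Matrix (Fin d) (Fin d) k)).map (algebraMap k K) := h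
    exact Matrix.map_injective (algebraMap k K).injective h2
  set F₂ := Matrix.GeneralLinearGroup.toLin (n := Fin d) (R := K) with hF₂
  set F₃ := LinearMap.GeneralLinearGroup.generalLinearEquiv K (Fin d → K) with hF₃
  set F : (∀ i, G i) →* ((Fin d → K) ≃ₗ[K] (Fin d → K)) :=
    F₃.toMonoidHom.comp (F₂.toMonoidHom.comp (F₁.comp f)) with hF
  have hFinj : Function.Injective F := by
    exact (MulEquiv.injective F₃).comp ((MulEquiv.injective F₂).comp (hF₁inj.comp hf))
  set H : Fin n → Subgroup ((Fin d → K) ≃ₗ[K] (Fin d → K)) :=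
    fun i => (F.comp (MonoidHom.mulSingle G i)).range with hH
  have hsingleinj : ∀ i, Function.Injective (F.comp (MonoidHom.mulSingle G i)) :=
    fun i => hFinj.comp (Pi.mulSingle_injective (M := G) i)
  have hns' : ∀ i, ¬ IsSolvable ↥(H i) := by
    intro i hsol
    haveI : Group.IsSolvable _ := hsol
    apply hns i
    exact solvable_of_solvable_injective
      (f := (F.comp (MonoidHom.mulSingle G i)).rangeRestrict)
      (fun a b hab => hsingleinj i (by
        have := congrArg Subtype.val hab
        simpa using this))
  have hcomm : ∀ i j : Fin n, i ≠ j → ∀ g ∈ H i, ∀ h ∈ H j, g * h = h * g := by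
    rintro i j hij _ ⟨a, rfl⟩ _ ⟨b, rfl⟩
    have hc : Commute (Pi.mulSingle i a) (Pi.mulSingle j b) := Pi.mulSingle_commute hij a b
    have := congrArg F hc
    simpa [map_mul] using this
  have hrank : Module.finrank K (Fin d → K) = d := Module.finrank_fin_fun K
  have := MinRepAux.core K d (Fin d → K) hrank (Fin n) H hns' hcomm
  simpa using this
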